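/- Let H be a real Hilbert space and T_l : H → H a bounded linear operator with ‖T_l‖ ≤ 1 which is self-adjoint and positive (⟨T_l x, x⟩ ≥ 0 for all x ∈ H), with Ker(I − T_l) = {0}. Let (d_k) be a sequence with d_k ∈ [0,1] such that Σ_{k=1}^{∞} d_k (1 − d_k) diverges. Fix φ ∈ H and, for ψ ∈ H, let R_k^φ(ψ) denote the k-th element φ_k of the Mann–Maz'ya sequence for the operator x ↦ T_l x + ψ starting from φ, i.e. v₁ := φ, φ_{k+1} := T_l v_k + ψ, v_{k+1} := (1 − d_k) v_k + d_k φ_{k+1}. Let z ∈ H be such that the equation φ̄ = T_l φ̄ + z has a solution φ̄. Then there exist ε₀ > 0 and functions τ : (0,ε₀) → (0,∞) and k : (0,ε₀) → ℕ such that (i) τ(ε) → 0 as ε → 0, and (ii) for every ε ∈ (0,ε₀) and every z_ε ∈ H with ‖z_ε − z‖ ≤ ε one has ‖R_{k(ε)}^φ(z_ε) − φ̄‖ ≤ τ(ε). -/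

import Mathlib

open Filter Finset
open scoped RealInnerProductSpace

section
variable {H : Type*} [NormedAddCommGroup H] [InnerProductSpace ℝ H]
variable (B : H →L[ℝ] H)
variable (hsym : ∀ x y : H, ⟪B x, y⟫ = ⟪x, B y⟫)
variable (h0 : ∀ x : H, 0 ≤ ⟪B x, x⟫)
variable (h1 : ∀ x : H, ⟪B x, x⟫ ≤ ‖x‖^2)

include hsym h0 h1 in
lemma mm_cs (x : H) : ‖B x‖^2 ≤ ⟪B x, x⟫ := by
  have key : ∀ t : ℝ, 0 ≤ ⟪B (B x), B x⟫ * (t*t) + (2*‖B x‖^2) * t + ⟪B x, x⟫ := by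
    intro t
    have h := h0 (x + t • B x)
    have e1 : ⟪B (x + t • B x), x + t • B x⟫
        = ⟪B x, x⟫ + t * ⟪B x, B x⟫ + t * ⟪B (B x), x⟫
          + t * (t * ⟪B (B x), B x⟫) := by
      simp [map_add, map_smul, inner_add_left, inner_add_right, inner_smul_left,
        inner_smul_right]
      ring
    have e2 : ⟪B (B x), x⟫ = ⟪B x, B x⟫ := hsym (B x) x
    have e3 : ⟪B x, B x⟫ = ‖B x‖^2 := real_inner_self_eq_norm_sq (B x)
    rw [e1, e2, e3] at h
    nlinarith [h]
  have hd := discrim_le_zero key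
  rw [discrim] at hd
  have ha : ⟪B (B x), B x⟫ ≤ ‖B x‖^2 := h1 (B x)
  have hc : 0 ≤ ⟪B x, x⟫ := h0 x
  rcases eq_or_lt_of_le (sq_nonneg ‖B x‖) with h|h
  · rw [← h]; exact hc
  · nlinarith [hd, ha, hc, h]

include hsym h0 h1 in
lemma mm_step1 (t : ℝ) (ht : t ∈ Set.Icc (0:ℝ) 1) (y : H) :
    ‖y - t • B y‖^2 ≤ ‖y‖^2 - 2*(t*(1-t))*⟪B y, y⟫ := by
  obtain ⟨ht0, ht1⟩ := ht
  have hcs := mm_cs B hsym h0 h1 y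
  have hb := h0 y
  have e : ‖y - t • B y‖^2 = ‖y‖^2 - 2*(t*⟪B y, y⟫) + t^2*‖B y‖^2 := by
    rw [norm_sub_sq_real, inner_smul_right, norm_smul, real_inner_comm]
    rw [mul_pow, Real.norm_eq_abs, sq_abs]
  rw [e]
  nlinarith [sq_nonneg t, sq_nonneg ‖B y‖]

include hsym h1 in
lemma mm_step2 (t : ℝ) (ht : t ∈ Set.Icc (0:ℝ) 1) (y : H) :
    ⟪B (y - t • B y), y - t • B y⟫ ≤ ⟪B y, y⟫ := by
  obtain ⟨ht0, ht1⟩ := ht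
  have e : ⟪B (y - t • B y), y - t • B y⟫
      = ⟪B y, y⟫ - t*⟪B y, B y⟫ - t*⟪B (B y), y⟫ + t*(t*⟪B (B y), B y⟫) := by
    simp [map_sub, map_smul, inner_sub_left, inner_sub_right, inner_smul_left,
      inner_smul_right]
    ring
  have e2 : ⟪B (B y), y⟫ = ⟪B y, B y⟫ := hsym (B y) y
  have e3 : ⟪B y, B y⟫ = ‖B y‖^2 := real_inner_self_eq_norm_sq (B y)
  have h4 : ⟪B (B y), B y⟫ ≤ ‖B y‖^2 := h1 (B y)
  rw [e, e2, e3]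
  nlinarith [mul_nonneg ht0 (sq_nonneg ‖B y‖), mul_le_mul_of_nonneg_left h4 (mul_nonneg ht0 ht0),
    mul_le_mul_of_nonneg_right ht1 (mul_nonneg ht0 (sq_nonneg ‖B y‖))]

variable (d : ℕ → ℝ) (hd : ∀ k, d k ∈ Set.Icc (0:ℝ) 1)

noncomputable def mmA : ℕ → (H →L[ℝ] H)
  | 0 => 1
  | (n+1) => (1 - d (n+1) • B) * mmA n

lemma mmA_zero_apply (x : H) : mmA B d 0 x = x := by simp [mmA]

lemma mmA_succ_apply (n : ℕ) (x : H) :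
    mmA B d (n+1) x = mmA B d n x - d (n+1) • B (mmA B d n x) := by
  simp [mmA, ContinuousLinearMap.mul_apply, ContinuousLinearMap.sub_apply,
    ContinuousLinearMap.smul_apply]

lemma mmA_comm_B (n : ℕ) (x : H) : B (mmA B d n x) = mmA B d n (B x) := by
  induction n with
  | zero => simp [mmA]
  | succ n ih =>
    rw [mmA_succ_apply, mmA_succ_apply, map_sub, map_smul, ih]

include hsym h0 h1 hd in
lemma mmA_sq_succ_le (n : ℕ) (x : H) :
    ‖mmA B d (n+1) x‖^2 ≤ ‖mmA B d n x‖^2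
      - 2*(d (n+1)*(1 - d (n+1)))*⟪B (mmA B d n x), mmA B d n x⟫ := by
  rw [mmA_succ_apply]
  exact mm_step1 B hsym h0 h1 (d (n+1)) (hd (n+1)) _

include hsym h0 h1 hd in
lemma mmA_norm_le (n : ℕ) (x : H) : ‖mmA B d n x‖ ≤ ‖x‖ := by
  induction n with
  | zero => simp [mmA]
  | succ n ih =>
    have h := mmA_sq_succ_le B hsym h0 h1 d hd n x
    have hb := h0 (mmA B d n x)
    have hc : 0 ≤ d (n+1) * (1 - d (n+1)) := by
      obtain ⟨h1', h2'⟩ := hd (n+1)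
      nlinarith
    have : ‖mmA B d (n+1) x‖^2 ≤ ‖mmA B d n x‖^2 := by nlinarith
    have h2 : ‖mmA B d (n+1) x‖^2 ≤ ‖x‖^2 := by
      nlinarith [pow_le_pow_left₀ (norm_nonneg (mmA B d n x)) ih 2]
    exact le_of_pow_le_pow_left₀ two_ne_zero (norm_nonneg x) h2

include hsym h0 h1 hd in
lemma mmA_sum_le (n : ℕ) (x : H) :
    ∑ j ∈ Icc 1 n, 2*(d j*(1-d j))*⟪B (mmA B d (j-1) x), mmA B d (j-1) x⟫
      ≤ ‖x‖^2 - ‖mmA B d n x‖^2 := by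
  induction n with
  | zero => simp [mmA]
  | succ n ih =>
    rw [Finset.sum_Icc_succ_top (Nat.one_le_iff_ne_zero.mpr (Nat.succ_ne_zero n))]
    have h := mmA_sq_succ_le B hsym h0 h1 d hd n x
    simp only [Nat.add_sub_cancel]
    linarith

include hsym h0 h1 hd in
lemma mmA_beta_antitone (x : H) :
    Antitone (fun n => ⟪B (mmA B d n x), mmA B d n x⟫) := by
  apply antitone_nat_of_succ_le
  intro n
  rw [mmA_succ_apply]
  exact mm_step2 B hsym h1 (d (n+1)) (hd (n+1)) _

include hsym h0 h1 hd in
lemma mmA_beta_tendsto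
    (hdiv : Tendsto (fun n => ∑ k ∈ Icc 1 n, d k * (1 - d k)) atTop atTop)
    (x : H) :
    Tendsto (fun n => ⟪B (mmA B d n x), mmA B d n x⟫) atTop (nhds 0) := by
  set β := fun n => ⟪B (mmA B d n x), mmA B d n x⟫ with hβ
  have hmono := mmA_beta_antitone B hsym h0 h1 d hd x
  have hβ0 : ∀ n, 0 ≤ β n := fun n => h0 _
  rw [Metric.tendsto_atTop]
  intro ε hε
  have hex : ∃ m, β m < ε := by
    by_contra hcon
    push_neg at hcon
    obtain ⟨n, hn⟩ := (tendsto_atTop.mp hdiv (‖x‖^2/(2*ε) + 1)).exists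
    have hsum := mmA_sum_le B hsym h0 h1 d hd n x
    have hle : ∀ j ∈ Icc 1 n, 2*(d j*(1-d j))*ε
        ≤ 2*(d j*(1-d j))*⟪B (mmA B d (j-1) x), mmA B d (j-1) x⟫ := by
      intro j _
      obtain ⟨h1', h2'⟩ := hd j
      have : 0 ≤ d j * (1 - d j) := by nlinarith
      have := hcon (j-1)
      nlinarith
    have h2 := Finset.sum_le_sum hle
    have h3 : ∑ j ∈ Icc 1 n, 2*(d j*(1-d j))*ε
        = (2*ε) * ∑ j ∈ Icc 1 n, d j * (1 - d j) := by
      rw [Finset.mul_sum]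
      exact Finset.sum_congr rfl (fun j _ => by ring)
    have h4 : 0 ≤ ‖mmA B d n x‖^2 := sq_nonneg _
    have h5 : (2*ε) * (‖x‖^2/(2*ε) + 1) ≤ (2*ε) * ∑ j ∈ Icc 1 n, d j * (1 - d j) := by
      apply mul_le_mul_of_nonneg_left hn (by linarith)
    have h6 : (2*ε) * (‖x‖^2/(2*ε) + 1) = ‖x‖^2 + 2*ε := by
      field_simp
    nlinarith
  obtain ⟨m, hm⟩ := hex
  refine ⟨m, fun n hn => ?_⟩
  rw [Real.dist_eq, sub_zero, abs_of_nonneg (hβ0 n)]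
  exact lt_of_le_of_lt (hmono hn) hm

include hsym h0 h1 hd in
lemma mmA_B_tendsto
    (hdiv : Tendsto (fun n => ∑ k ∈ Icc 1 n, d k * (1 - d k)) atTop atTop)
    (x : H) :
    Tendsto (fun n => B (mmA B d n x)) atTop (nhds 0) := by
  have hβ := mmA_beta_tendsto B hsym h0 h1 d hd hdiv x
  have hsq : Tendsto (fun n => ‖B (mmA B d n x)‖^2) atTop (nhds 0) := by
    apply tendsto_of_tendsto_of_tendsto_of_le_of_le' tendsto_const_nhds hβ
    · exact Eventually.of_forall (fun n => sq_nonneg _)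
    · exact Eventually.of_forall (fun n => mm_cs B hsym h0 h1 _)
  rw [tendsto_zero_iff_norm_tendsto_zero]
  have := (Real.continuous_sqrt.tendsto 0).comp hsq
  simp only [Function.comp_def, Real.sqrt_zero] at this
  convert this using 2 with n
  · exact (Real.sqrt_sq (norm_nonneg _)).symm

include hsym h0 h1 hd in
lemma mmA_tendsto [CompleteSpace H]
    (hker : ∀ x : H, B x = 0 → x = 0)
    (hdiv : Tendsto (fun n => ∑ k ∈ Icc 1 n, d k * (1 - d k)) atTop atTop)
    (x : H) :
    Tendsto (fun n => mmA B d n x) atTop (nhds 0) := by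
  -- density of the range of B
  have hdense : ∀ w : H, ∀ ε > (0:ℝ), ∃ u : H, ‖w - B u‖ < ε := by
    have hbot : (LinearMap.range (B : H →ₗ[ℝ] H))ᗮ = ⊥ := by
      rw [Submodule.eq_bot_iff]
      intro v hv
      rw [Submodule.mem_orthogonal] at hv
      have h : ⟪B v, v⟫ = 0 := hv (B v) ⟨v, rfl⟩
      have h2 : ‖B v‖^2 ≤ 0 := by
        have := mm_cs B hsym h0 h1 v
        rw [h] at this
        exact this
      have h3 : B v = 0 := by
        have := sq_nonneg ‖B v‖
        have : ‖B v‖^2 = 0 := le_antisymm h2 this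
        simpa [pow_eq_zero_iff] using this
      exact hker v h3
    have htop : (LinearMap.range (B : H →ₗ[ℝ] H)).topologicalClosure = ⊤ :=
      Submodule.topologicalClosure_eq_top_iff.mpr hbot
    intro w ε hε
    have hw : w ∈ (LinearMap.range (B : H →ₗ[ℝ] H)).topologicalClosure := by
      rw [htop]; trivial
    have hw2 : w ∈ closure ((LinearMap.range (B : H →ₗ[ℝ] H) : Submodule ℝ H) : Set H) := by
      rw [← Submodule.topologicalClosure_coe]; exact hw
    rw [Metric.mem_closure_iff] at hw2
    obtain ⟨b, hb, hdist⟩ := hw2 ε hε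
    obtain ⟨u, rfl⟩ := hb
    exact ⟨u, by rwa [← dist_eq_norm]⟩
  rw [Metric.tendsto_atTop]
  intro ε hε
  obtain ⟨u, hu⟩ := hdense x (ε/2) (by linarith)
  have hBu := mmA_B_tendsto B hsym h0 h1 d hd hdiv u
  rw [Metric.tendsto_atTop] at hBu
  obtain ⟨N, hN⟩ := hBu (ε/2) (by linarith)
  refine ⟨N, fun n hn => ?_⟩
  have h1' : mmA B d n x = mmA B d n (x - B u) + mmA B d n (B u) := by
    rw [← map_add]; congr 1; abel
  rw [dist_eq_norm, sub_zero, h1']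
  have h2' : ‖mmA B d n (x - B u)‖ ≤ ‖x - B u‖ := mmA_norm_le B hsym h0 h1 d hd n _
  have h3' : mmA B d n (B u) = B (mmA B d n u) := (mmA_comm_B B d n u).symm
  have h4' : ‖B (mmA B d n u)‖ < ε/2 := by
    have := hN n hn
    rwa [dist_eq_norm, sub_zero] at this
  calc ‖mmA B d n (x - B u) + mmA B d n (B u)‖
      ≤ ‖mmA B d n (x - B u)‖ + ‖mmA B d n (B u)‖ := norm_add_le _ _
    _ < ε := by rw [h3']; have := lt_of_le_of_lt h2' hu; linarith

end
theorem mann_mazya_regularization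
    {H : Type*} [NormedAddCommGroup H] [InnerProductSpace ℝ H] [CompleteSpace H]
    (Tl : H →L[ℝ] H) (hTl : ‖Tl‖ ≤ 1)
    (hsa : ∀ x y : H, inner ℝ (Tl x) y = (inner ℝ x (Tl y) : ℝ))
    (hpos : ∀ x : H, 0 ≤ (inner ℝ (Tl x) x : ℝ))
    (hker : ∀ x : H, Tl x = x → x = 0)
    (d : ℕ → ℝ) (hd : ∀ k, d k ∈ Set.Icc (0 : ℝ) 1)
    (hdiv : Tendsto (fun n => ∑ k ∈ Icc 1 n, d k * (1 - d k)) atTop atTop)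
    (φ : H)
    (Φ V : H → ℕ → H)
    (hΦ1 : ∀ ψ, Φ ψ 1 = φ) (hV1 : ∀ ψ, V ψ 1 = φ)
    (hΦrec : ∀ ψ, ∀ k, 1 ≤ k → Φ ψ (k + 1) = Tl (V ψ k) + ψ)
    (hVrec : ∀ ψ, ∀ k, 1 ≤ k → V ψ (k + 1) = (1 - d k) • V ψ k + d k • Φ ψ (k + 1))
    (z : H) (φbar : H) (hfix : φbar = Tl φbar + z) :
    ∃ ε₀ > (0 : ℝ), ∃ τ : ℝ → ℝ, ∃ K : ℝ → ℕ,
      (∀ ε ∈ Set.Ioo (0 : ℝ) ε₀, 0 < τ ε) ∧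
      Tendsto τ (nhdsWithin 0 (Set.Ioi 0)) (nhds 0) ∧
      (∀ ε ∈ Set.Ioo (0 : ℝ) ε₀, ∀ zε : H, ‖zε - z‖ ≤ ε →
        ‖Φ zε (K ε) - φbar‖ ≤ τ ε) := by
  -- the operator `B = I - Tl`
  set B : H →L[ℝ] H := 1 - Tl with hBdef
  have hBapp : ∀ u : H, B u = u - Tl u := by
    intro u
    simp [hBdef, ContinuousLinearMap.sub_apply]
  have hTlle : ∀ u : H, ‖Tl u‖ ≤ ‖u‖ := by
    intro u
    calc ‖Tl u‖ ≤ ‖Tl‖ * ‖u‖ := Tl.le_opNorm u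
      _ ≤ 1 * ‖u‖ := mul_le_mul_of_nonneg_right hTl (norm_nonneg u)
      _ = ‖u‖ := one_mul _
  have hsym : ∀ x y : H, ⟪B x, y⟫ = ⟪x, B y⟫ := by
    intro x y
    rw [hBapp, hBapp, inner_sub_left, inner_sub_right, hsa]
  have h0 : ∀ x : H, 0 ≤ ⟪B x, x⟫ := by
    intro x
    rw [hBapp, inner_sub_left]
    have h := real_inner_le_norm (Tl x) x
    have h2 := hTlle x
    have h3 : ⟪x, x⟫ = ‖x‖^2 := real_inner_self_eq_norm_sq x
    nlinarith [norm_nonneg x]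
  have h1 : ∀ x : H, ⟪B x, x⟫ ≤ ‖x‖^2 := by
    intro x
    rw [hBapp, inner_sub_left]
    have h := hpos x
    have h3 : ⟪x, x⟫ = ‖x‖^2 := real_inner_self_eq_norm_sq x
    linarith
  have hkerB : ∀ x : H, B x = 0 → x = 0 := by
    intro x hx
    rw [hBapp] at hx
    exact hker x (by rwa [sub_eq_zero, eq_comm] at hx)
  have hz : z = φbar - Tl φbar := by
    apply eq_sub_of_add_eq
    rw [add_comm]
    exact hfix.symm
  set x0 : H := φ - φbar with hx0
  -- the exact sequence is given by `mmA`
  have hVz : ∀ k, 1 ≤ k → V z k - φbar = mmA B d (k - 1) x0 := by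
    intro k hk
    induction k, hk using Nat.le_induction with
    | base => simp [hV1 z, mmA_zero_apply, hx0]
    | succ n hn ih =>
      obtain ⟨m, rfl⟩ : ∃ m, n = m + 1 := ⟨n - 1, (Nat.succ_pred_eq_of_pos hn).symm⟩
      simp only [Nat.add_sub_cancel] at ih ⊢
      rw [hVrec z (m+1) (by omega), hΦrec z (m+1) (by omega), mmA_succ_apply]
      have hv : V z (m+1) = mmA B d m x0 + φbar := by rw [← ih]; abel
      rw [hv, hBapp, hz, map_add, map_sub]
      module
  have hconv : Tendsto (fun n => mmA B d n x0) atTop (nhds 0) :=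
    mmA_tendsto B hsym h0 h1 d hd hkerB hdiv x0
  set a : ℕ → ℝ := fun k => ‖Φ z k - φbar‖ with ha_def
  have ha0 : ∀ k, 0 ≤ a k := fun k => norm_nonneg _
  have ha_tendsto : Tendsto a atTop (nhds 0) := by
    have h1' : Tendsto (fun n => ‖mmA B d n x0‖) atTop (nhds 0) := by
      rw [tendsto_zero_iff_norm_tendsto_zero] at hconv
      exact hconv
    have h2' : Tendsto (fun k : ℕ => ‖mmA B d (k - 2) x0‖) atTop (nhds 0) :=
      h1'.comp (tendsto_sub_atTop_nat 2)
    apply tendsto_of_tendsto_of_tendsto_of_le_of_le' tendsto_const_nhds h2'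
    · exact Eventually.of_forall ha0
    · rw [eventually_atTop]
      refine ⟨2, fun k hk => ?_⟩
      obtain ⟨m, rfl⟩ : ∃ m, k = m + 2 := ⟨k - 2, by omega⟩
      have e1 : Φ z (m + 2) = Tl (V z (m + 1)) + z := hΦrec z (m+1) (by omega)
      have e2 : Φ z (m + 2) - φbar = Tl (V z (m + 1) - φbar) := by
        rw [e1, map_sub, hz]
        abel
      have e3 := hVz (m + 1) (by omega)
      simp only [Nat.add_sub_cancel] at e3
      show ‖Φ z (m + 2) - φbar‖ ≤ ‖mmA B d (m + 2 - 2) x0‖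
      have e4 : m + 2 - 2 = m := by omega
      rw [e2, e3, e4]
      exact hTlle _
  -- perturbation estimate
  have hpert : ∀ ψ : H, ∀ k, 1 ≤ k →
      ‖Φ ψ k - Φ z k‖ ≤ k * ‖ψ - z‖ ∧ ‖V ψ k - V z k‖ ≤ k * ‖ψ - z‖ := by
    intro ψ k hk
    induction k, hk using Nat.le_induction with
    | base =>
      constructor
      · rw [hΦ1 ψ, hΦ1 z, sub_self]
        simpa using norm_nonneg (ψ - z)
      · rw [hV1 ψ, hV1 z, sub_self]
        simpa using norm_nonneg (ψ - z)
    | succ n hn ih =>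
      obtain ⟨ihΦ, ihV⟩ := ih
      have hΦs : ‖Φ ψ (n+1) - Φ z (n+1)‖ ≤ ((n+1 : ℕ) : ℝ) * ‖ψ - z‖ := by
        rw [hΦrec ψ n hn, hΦrec z n hn]
        have e : Tl (V ψ n) + ψ - (Tl (V z n) + z) = Tl (V ψ n - V z n) + (ψ - z) := by
          rw [map_sub]; abel
        rw [e]
        calc ‖Tl (V ψ n - V z n) + (ψ - z)‖
            ≤ ‖Tl (V ψ n - V z n)‖ + ‖ψ - z‖ := norm_add_le _ _
          _ ≤ ‖V ψ n - V z n‖ + ‖ψ - z‖ := by linarith [hTlle (V ψ n - V z n)]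
          _ ≤ n * ‖ψ - z‖ + ‖ψ - z‖ := by linarith
          _ = ((n+1 : ℕ) : ℝ) * ‖ψ - z‖ := by push_cast; ring
      refine ⟨hΦs, ?_⟩
      rw [hVrec ψ n hn, hVrec z n hn]
      have e : (1 - d n) • V ψ n + d n • Φ ψ (n+1) - ((1 - d n) • V z n + d n • Φ z (n+1))
          = (1 - d n) • (V ψ n - V z n) + d n • (Φ ψ (n+1) - Φ z (n+1)) := by
        rw [smul_sub, smul_sub]; abel
      rw [e]
      obtain ⟨hd0, hd1⟩ := hd n
      calc ‖(1 - d n) • (V ψ n - V z n) + d n • (Φ ψ (n+1) - Φ z (n+1))‖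
          ≤ ‖(1 - d n) • (V ψ n - V z n)‖ + ‖d n • (Φ ψ (n+1) - Φ z (n+1))‖ :=
            norm_add_le _ _
        _ = (1 - d n) * ‖V ψ n - V z n‖ + d n * ‖Φ ψ (n+1) - Φ z (n+1)‖ := by
            rw [norm_smul, norm_smul, Real.norm_eq_abs, Real.norm_eq_abs,
              abs_of_nonneg (by linarith), abs_of_nonneg hd0]
        _ ≤ ((n+1 : ℕ) : ℝ) * ‖ψ - z‖ := by
            have hnn : (0:ℝ) ≤ ‖ψ - z‖ := norm_nonneg _
            push_cast
            have b1 : (1 - d n) * ‖V ψ n - V z n‖ ≤ (1 - d n) * (n * ‖ψ - z‖) :=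
              mul_le_mul_of_nonneg_left ihV (by linarith)
            have b2 : d n * ‖Φ ψ (n+1) - Φ z (n+1)‖ ≤ d n * (((n+1 : ℕ) : ℝ) * ‖ψ - z‖) :=
              mul_le_mul_of_nonneg_left hΦs hd0
            push_cast at b1 b2 hΦs ihV ⊢
            nlinarith
  -- the parameter functions
  refine ⟨1, one_pos, fun ε => a ⌈Real.sqrt ε⁻¹⌉₊ + (⌈Real.sqrt ε⁻¹⌉₊ : ℝ) * ε + ε,
    fun ε => ⌈Real.sqrt ε⁻¹⌉₊, ?_, ?_, ?_⟩
  · intro ε hε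
    have h1' := ha0 ⌈Real.sqrt ε⁻¹⌉₊
    have h2' : 0 ≤ (⌈Real.sqrt ε⁻¹⌉₊ : ℝ) * ε := mul_nonneg (Nat.cast_nonneg _) hε.1.le
    have := hε.1
    linarith
  · -- tendsto of τ
    have hKtend : Tendsto (fun ε : ℝ => ⌈Real.sqrt ε⁻¹⌉₊) (nhdsWithin 0 (Set.Ioi 0)) atTop := by
      rw [tendsto_atTop]
      intro M
      have hδpos : (0:ℝ) < (((M:ℝ)+1)^2)⁻¹ := by positivity
      filter_upwards [Ioo_mem_nhdsGT_of_mem (Set.mem_Ico.mpr ⟨le_refl 0, hδpos⟩)] with ε hε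
      obtain ⟨hε0, hεδ⟩ := hε
      have hy : (0:ℝ) < ((M:ℝ)+1)^2 := by positivity
      have h1' : ((M:ℝ)+1)^2 < ε⁻¹ := (lt_inv_comm₀ hε0 hy).mp hεδ
      have h2' : (M:ℝ) ≤ Real.sqrt ε⁻¹ := by
        have := Real.sqrt_le_sqrt h1'.le
        rw [Real.sqrt_sq (by positivity)] at this
        linarith
      have h3' : (M:ℝ) ≤ (⌈Real.sqrt ε⁻¹⌉₊ : ℝ) := le_trans h2' (Nat.le_ceil _)
      exact_mod_cast h3'
    have t1 : Tendsto (fun ε : ℝ => a ⌈Real.sqrt ε⁻¹⌉₊) (nhdsWithin 0 (Set.Ioi 0)) (nhds 0) :=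
      ha_tendsto.comp hKtend
    have t2 : Tendsto (fun ε : ℝ => (⌈Real.sqrt ε⁻¹⌉₊ : ℝ) * ε)
        (nhdsWithin 0 (Set.Ioi 0)) (nhds 0) := by
      have hub : Tendsto (fun ε : ℝ => Real.sqrt ε + ε) (nhdsWithin 0 (Set.Ioi 0)) (nhds 0) := by
        have : Tendsto (fun ε : ℝ => Real.sqrt ε + ε) (nhds 0) (nhds 0) := by
          have hs : Tendsto (fun ε : ℝ => Real.sqrt ε) (nhds 0) (nhds 0) := by
            have := Real.continuous_sqrt.tendsto 0
            simpa using this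
          simpa using hs.add tendsto_id
        exact this.mono_left nhdsWithin_le_nhds
      apply tendsto_of_tendsto_of_tendsto_of_le_of_le' tendsto_const_nhds hub
      · filter_upwards [self_mem_nhdsWithin] with ε hε
        have hε0 : (0:ℝ) < ε := hε
        positivity
      · filter_upwards [self_mem_nhdsWithin] with ε hε
        have hε0 : (0:ℝ) < ε := hε
        have hc : (⌈Real.sqrt ε⁻¹⌉₊ : ℝ) < Real.sqrt ε⁻¹ + 1 :=
          Nat.ceil_lt_add_one (Real.sqrt_nonneg _)
        have hmul : (⌈Real.sqrt ε⁻¹⌉₊ : ℝ) * ε ≤ (Real.sqrt ε⁻¹ + 1) * ε :=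
          mul_le_mul_of_nonneg_right hc.le hε0.le
        have hsqrtpos : 0 < Real.sqrt ε := Real.sqrt_pos.mpr hε0
        have h5 : Real.sqrt ε⁻¹ * ε = Real.sqrt ε := by
          rw [Real.sqrt_inv]
          rw [← Real.mul_self_sqrt hε0.le]
          field_simp
          rw [Real.sqrt_sq hsqrtpos.le]
        calc (⌈Real.sqrt ε⁻¹⌉₊ : ℝ) * ε ≤ (Real.sqrt ε⁻¹ + 1) * ε := hmul
          _ = Real.sqrt ε⁻¹ * ε + ε := by ring
          _ = Real.sqrt ε + ε := by rw [h5]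
    have t3 : Tendsto (fun ε : ℝ => ε) (nhdsWithin 0 (Set.Ioi 0)) (nhds 0) :=
      tendsto_id.mono_left nhdsWithin_le_nhds
    have := (t1.add t2).add t3
    simpa using this
  · -- the error bound
    intro ε hε zε hzε
    obtain ⟨hε0, hε1⟩ := hε
    set k := ⌈Real.sqrt ε⁻¹⌉₊ with hk_def
    have hk1 : 1 ≤ k := Nat.ceil_pos.mpr (Real.sqrt_pos.mpr (inv_pos.mpr hε0))
    have htri : ‖Φ zε k - φbar‖ ≤ ‖Φ zε k - Φ z k‖ + ‖Φ z k - φbar‖ := by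
      have := dist_triangle (Φ zε k) (Φ z k) φbar
      simpa [dist_eq_norm] using this
    have hp := (hpert zε k hk1).1
    have hmul : (k:ℝ) * ‖zε - z‖ ≤ (k:ℝ) * ε :=
      mul_le_mul_of_nonneg_left hzε (Nat.cast_nonneg _)
    have : ‖Φ z k - φbar‖ = a k := rfl
    linarith
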